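/- Let ν > 0, T > 0, M ∈ ℕ with M ≥ 1, and N ∈ ℕ. Then ∑_{k=1}^{N} ((1 - exp(-2 ν π² k² T))/(2 ν π² k²)) · (1 - exp(-ν π² k² T/M))² ≤ (√T/(2 √M)) · (1/(π √ν) + 1/(ν π²) + 4 π √ν). -/

import Mathlib

lemma tail_sq_sum (m : ℕ) (hm : 1 ≤ m) (N : ℕ) :
    ∑ k ∈ Finset.Icc m N, (1:ℝ)/(k:ℝ)^2 ≤ 2/m := by
  have key : ∀ n : ℕ, m ≤ n → ∑ k ∈ Finset.Icc m n, (1:ℝ)/(k:ℝ)^2 ≤ 2/m - 2/(n+1) := by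
    intro n
    induction n with
    | zero => intro h; omega
    | succ n ih =>
      intro h
      rw [Finset.sum_Icc_succ_top h]
      have hmn : ∑ k ∈ Finset.Icc m n, (1:ℝ)/(k:ℝ)^2 ≤ 2/m - 2/((n:ℝ)+1) := by
        rcases Nat.lt_or_ge n m with h1 | h1
        · have hme : m = n + 1 := by omega
          subst hme
          rw [Finset.Icc_eq_empty_of_lt (by omega)]
          simp
        · exact ih h1
      have hn1 : (0:ℝ) < (n:ℝ)+1 := by positivity
      have hstep : (1:ℝ)/((n:ℝ)+1)^2 ≤ 2/((n:ℝ)+1) - 2/((n:ℝ)+2) := by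
        rw [div_sub_div _ _ (ne_of_gt hn1) (by positivity), div_le_div_iff₀ (by positivity) (by positivity)]
        ring_nf
        nlinarith [hn1]
      have he : 2/((n:ℝ)+1+1) = 2/((n:ℝ)+2) := by ring_nf
      push_cast
      rw [he]
      linarith
  rcases Nat.lt_or_ge N m with h | h
  · rw [Finset.Icc_eq_empty_of_lt h]
    simp
    positivity
  · have h1 := key N h
    have : (0:ℝ) ≤ 2/((N:ℝ)+1) := by positivity
    linarith

set_option maxHeartbeats 1600000 in
open Real in
theorem stmt_14 (ν T : ℝ) (hν : 0 < ν) (hT : 0 < T) (M : ℕ) (hM : 1 ≤ M) (N : ℕ) :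
    ∑ k ∈ Finset.Icc 1 N,
        ((1 - Real.exp (-(2 * ν * π ^ 2 * k ^ 2 * T))) / (2 * ν * π ^ 2 * k ^ 2)) *
          (1 - Real.exp (-(ν * π ^ 2 * k ^ 2 * T / M))) ^ 2 ≤
      (Real.sqrt T / (2 * Real.sqrt M)) *
        (1 / (π * Real.sqrt ν) + 1 / (ν * π ^ 2) + 4 * π * Real.sqrt ν) := by
  have hπ : 0 < π := Real.pi_pos
  have hM' : (0:ℝ) < M := by exact_mod_cast Nat.lt_of_lt_of_le Nat.zero_lt_one hM
  set c : ℝ := Real.sqrt ((M:ℝ)/(ν*π^2*T)) with hc_def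
  have hc : 0 < c := Real.sqrt_pos.mpr (by positivity)
  have hc2 : c^2 = (M:ℝ)/(ν*π^2*T) := Real.sq_sqrt (by positivity)
  have hkey : ν*π^2*T*c^2 = (M:ℝ) := by rw [hc2]; field_simp
  have hc_eq : c = Real.sqrt M/(π*Real.sqrt ν*Real.sqrt T) := by
    have hsM : Real.sqrt M ^ 2 = (M:ℝ) := Real.sq_sqrt hM'.le
    have hsν : Real.sqrt ν ^ 2 = ν := Real.sq_sqrt hν.le
    have hsT : Real.sqrt T ^ 2 = T := Real.sq_sqrt hT.le
    have he : (Real.sqrt M/(π*Real.sqrt ν*Real.sqrt T))^2 = (M:ℝ)/(ν*π^2*T) := by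
      rw [div_pow, mul_pow, mul_pow, hsM, hsν, hsT]
      ring
    rw [hc_def, ← he, Real.sqrt_sq (by positivity)]
  set K : ℕ := ⌊c⌋₊ with hK_def
  have hKc : (K:ℝ) ≤ c := Nat.floor_le hc.le
  have hcK : c < (K:ℝ) + 1 := Nat.lt_floor_add_one c
  clear_value K
  clear_value c
  -- termwise bound
  have hterm : ∀ k ∈ Finset.Icc 1 N,
      ((1 - Real.exp (-(2 * ν * π ^ 2 * (k:ℝ) ^ 2 * T))) / (2 * ν * π ^ 2 * (k:ℝ) ^ 2)) *
          (1 - Real.exp (-(ν * π ^ 2 * (k:ℝ) ^ 2 * T / M))) ^ 2 ≤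
        (if k ≤ K then ν*π^2*(k:ℝ)^2*T^2/(2*M^2) else 1/(2*ν*π^2*(k:ℝ)^2)) := by
    intro k hk
    have hk1 : 1 ≤ k := (Finset.mem_Icc.mp hk).1
    have hk0 : (0:ℝ) < (k:ℝ) := by exact_mod_cast hk1
    have hlam : (0:ℝ) < 2*ν*π^2*(k:ℝ)^2 :=
      mul_pos (by positivity) (pow_pos hk0 2)
    have hx0 : (0:ℝ) ≤ ν*π^2*(k:ℝ)^2*T/M := by positivity
    have hy0 : (0:ℝ) ≤ 2*ν*π^2*(k:ℝ)^2*T := by positivity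
    have hB0 : 0 ≤ 1 - Real.exp (-(ν*π^2*(k:ℝ)^2*T/M)) := by
      have : Real.exp (-(ν*π^2*(k:ℝ)^2*T/M)) ≤ 1 :=
        Real.exp_le_one_iff.mpr (by linarith)
      linarith
    have hB1 : 1 - Real.exp (-(ν*π^2*(k:ℝ)^2*T/M)) ≤ 1 := by
      have := Real.exp_pos (-(ν*π^2*(k:ℝ)^2*T/M)); linarith
    have hBx : 1 - Real.exp (-(ν*π^2*(k:ℝ)^2*T/M)) ≤ ν*π^2*(k:ℝ)^2*T/M := by
      have := Real.add_one_le_exp (-(ν*π^2*(k:ℝ)^2*T/M)); linarith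
    have hA1 : 1 - Real.exp (-(2*ν*π^2*(k:ℝ)^2*T)) ≤ 1 := by
      have := Real.exp_pos (-(2*ν*π^2*(k:ℝ)^2*T)); linarith
    have hA0 : 0 ≤ 1 - Real.exp (-(2*ν*π^2*(k:ℝ)^2*T)) := by
      have : Real.exp (-(2*ν*π^2*(k:ℝ)^2*T)) ≤ 1 :=
        Real.exp_le_one_iff.mpr (by linarith)
      linarith
    by_cases hkK : k ≤ K
    · rw [if_pos hkK]
      calc ((1 - Real.exp (-(2 * ν * π ^ 2 * (k:ℝ) ^ 2 * T))) / (2 * ν * π ^ 2 * (k:ℝ) ^ 2)) *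
          (1 - Real.exp (-(ν * π ^ 2 * (k:ℝ) ^ 2 * T / M))) ^ 2
          ≤ (1 / (2 * ν * π ^ 2 * (k:ℝ) ^ 2)) * (ν*π^2*(k:ℝ)^2*T/M)^2 := by
            apply mul_le_mul
            · exact div_le_div_of_nonneg_right hA1 hlam.le
            · exact pow_le_pow_left₀ hB0 hBx 2
            · positivity
            · positivity
        _ = ν*π^2*(k:ℝ)^2*T^2/(2*M^2) := by
            field_simp
    · rw [if_neg hkK]
      calc ((1 - Real.exp (-(2 * ν * π ^ 2 * (k:ℝ) ^ 2 * T))) / (2 * ν * π ^ 2 * (k:ℝ) ^ 2)) *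
          (1 - Real.exp (-(ν * π ^ 2 * (k:ℝ) ^ 2 * T / M))) ^ 2
          ≤ (1 / (2 * ν * π ^ 2 * (k:ℝ) ^ 2)) * 1 := by
            apply mul_le_mul
            · exact div_le_div_of_nonneg_right hA1 hlam.le
            · exact pow_le_one₀ hB0 hB1
            · positivity
            · positivity
        _ = 1/(2*ν*π^2*(k:ℝ)^2) := by ring
  -- sum splitting
  have hsplit : ∑ k ∈ Finset.Icc 1 N,
      (if k ≤ K then ν*π^2*(k:ℝ)^2*T^2/(2*M^2) else 1/(2*ν*π^2*(k:ℝ)^2))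
      ≤ (∑ k ∈ Finset.Icc 1 K, ν*π^2*(k:ℝ)^2*T^2/(2*M^2))
        + ∑ k ∈ Finset.Icc (K+1) N, 1/(2*ν*π^2*(k:ℝ)^2) := by
    rw [Finset.sum_ite]
    apply add_le_add
    · apply Finset.sum_le_sum_of_subset_of_nonneg
      · intro x hx
        simp only [Finset.mem_filter, Finset.mem_Icc] at *
        omega
      · intro i _ _; positivity
    · apply Finset.sum_le_sum_of_subset_of_nonneg
      · intro x hx
        simp only [Finset.mem_filter, Finset.mem_Icc] at *
        omega
      · intro i _ _; positivity
  -- small part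
  have hsmall : (∑ k ∈ Finset.Icc 1 K, ν*π^2*(k:ℝ)^2*T^2/(2*M^2)) ≤ T*c/(2*M) := by
    have h1 : (∑ k ∈ Finset.Icc 1 K, ν*π^2*(k:ℝ)^2*T^2/(2*M^2))
        ≤ (K:ℝ) * (ν*π^2*(K:ℝ)^2*T^2/(2*M^2)) := by
      have := Finset.sum_le_card_nsmul (Finset.Icc 1 K)
        (fun k => ν*π^2*(k:ℝ)^2*T^2/(2*M^2)) (ν*π^2*(K:ℝ)^2*T^2/(2*M^2)) ?_
      · simpa [Nat.card_Icc, nsmul_eq_mul] using this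
      · intro k hk
        have hkK : k ≤ K := (Finset.mem_Icc.mp hk).2
        have hkr : (k:ℝ) ≤ (K:ℝ) := by exact_mod_cast hkK
        show ν*π^2*(k:ℝ)^2*T^2/(2*(M:ℝ)^2) ≤ ν*π^2*(K:ℝ)^2*T^2/(2*(M:ℝ)^2)
        gcongr
    have h2 : (K:ℝ) * (ν*π^2*(K:ℝ)^2*T^2/(2*M^2)) ≤ ν*π^2*T^2/(2*M^2)*c^3 := by
      have h3 : (K:ℝ)^3 ≤ c^3 := pow_le_pow_left₀ (Nat.cast_nonneg K) hKc 3
      calc (K:ℝ) * (ν*π^2*(K:ℝ)^2*T^2/(2*M^2)) = ν*π^2*T^2/(2*M^2)*(K:ℝ)^3 := by ring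
        _ ≤ ν*π^2*T^2/(2*M^2)*c^3 := mul_le_mul_of_nonneg_left h3 (by positivity)
    have h4 : ν*π^2*T^2/(2*M^2)*c^3 = T*c/(2*M) := by
      have hM0 : (M:ℝ) ≠ 0 := ne_of_gt hM'
      field_simp
      linear_combination hkey
    linarith
  -- tail part
  have htail : (∑ k ∈ Finset.Icc (K+1) N, 1/(2*ν*π^2*(k:ℝ)^2)) ≤ T*c/M := by
    have h1 : (∑ k ∈ Finset.Icc (K+1) N, 1/(2*ν*π^2*(k:ℝ)^2))
        = (1/(2*ν*π^2)) * ∑ k ∈ Finset.Icc (K+1) N, (1:ℝ)/(k:ℝ)^2 := by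
      rw [Finset.mul_sum]
      apply Finset.sum_congr rfl
      intro k _
      ring
    rw [h1]
    have h2 := tail_sq_sum (K+1) (by omega) N
    have h4 : 2/((K:ℝ)+1) ≤ 2/c :=
      div_le_div_of_nonneg_left (by norm_num) hc (by linarith)
    have h5 : (2:ℝ)/((K+1:ℕ):ℝ) ≤ 2/c := by push_cast; exact h4
    have h6 : (1/(2*ν*π^2)) * ∑ k ∈ Finset.Icc (K+1) N, (1:ℝ)/(k:ℝ)^2
        ≤ (1/(2*ν*π^2)) * (2/c) := by
      apply mul_le_mul_of_nonneg_left (le_trans h2 h5) (by positivity)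
    have h7 : (1/(2*ν*π^2)) * (2/c) = T*c/M := by
      have hM0 : (M:ℝ) ≠ 0 := ne_of_gt hM'
      field_simp
      linear_combination (-1)*hkey
    linarith
  -- final algebra
  have hfin : T*c/(2*M) + T*c/M ≤ (Real.sqrt T / (2 * Real.sqrt M)) *
        (1 / (π * Real.sqrt ν) + 1 / (ν * π ^ 2) + 4 * π * Real.sqrt ν) := by
    set a : ℝ := Real.sqrt T with ha_def
    set b : ℝ := Real.sqrt M with hb_def
    set u : ℝ := Real.sqrt ν with hu_def
    have hsM : b ^ 2 = (M:ℝ) := Real.sq_sqrt hM'.le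
    have hsν : u ^ 2 = ν := Real.sq_sqrt hν.le
    have hsT : a ^ 2 = T := Real.sq_sqrt hT.le
    have hb0 : 0 < b := Real.sqrt_pos.mpr hM'
    have hu0 : 0 < u := Real.sqrt_pos.mpr hν
    have ha0 : 0 < a := Real.sqrt_pos.mpr hT
    clear_value a b u
    rw [hc_eq, ← hsM, ← hsν, ← hsT]
    have heq : a^2*(b/(π*u*a))/(2*b^2) + a^2*(b/(π*u*a))/b^2
        = (a/(2*b)) * (3/(π*u)) := by
      field_simp
      ring
    rw [heq]
    apply mul_le_mul_of_nonneg_left _ (by positivity)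
    have h2 : 0 ≤ 1 + 4*π^3*u^3 - 2*π*u := by
      nlinarith [mul_nonneg (mul_nonneg hπ.le hu0.le) (sq_nonneg (2*π*u - 1)),
        sq_nonneg (8*π*u - 3)]
    have e1 : 3/(π*u) - 1/(π*u) = 2/(π*u) := by ring
    have e2 : 1/(u^2*π^2) + 4*π*u - 2/(π*u) = (1 + 4*π^3*u^3 - 2*π*u)/(π^2*u^2) := by
      field_simp
    have e3 : 0 ≤ (1 + 4*π^3*u^3 - 2*π*u)/(π^2*u^2) := div_nonneg h2 (by positivity)
    linarith
  calc ∑ k ∈ Finset.Icc 1 N,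
        ((1 - Real.exp (-(2 * ν * π ^ 2 * (k:ℝ) ^ 2 * T))) / (2 * ν * π ^ 2 * (k:ℝ) ^ 2)) *
          (1 - Real.exp (-(ν * π ^ 2 * (k:ℝ) ^ 2 * T / M))) ^ 2
      ≤ ∑ k ∈ Finset.Icc 1 N,
        (if k ≤ K then ν*π^2*(k:ℝ)^2*T^2/(2*M^2) else 1/(2*ν*π^2*(k:ℝ)^2)) :=
        Finset.sum_le_sum hterm
    _ ≤ (∑ k ∈ Finset.Icc 1 K, ν*π^2*(k:ℝ)^2*T^2/(2*M^2))
        + ∑ k ∈ Finset.Icc (K+1) N, 1/(2*ν*π^2*(k:ℝ)^2) := hsplit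
    _ ≤ T*c/(2*M) + T*c/M := add_le_add hsmall htail
    _ ≤ _ := hfin
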